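/- The minimum Frobenius distance from E_ψ to the set of pure product states on ℂ^N equals √(2(1 − |v_{j₀}|²)), where |v_{j₀}| = max_j |v_j|; that is, every pure product state A satisfies ‖E_ψ − A‖ ≥ √(2(1 − |v_{j₀}|²)), and this distance is attained by the pure product state S_ψ = |e_{j₀}⊗⋯⊗e_{j₀}⟩⟨e_{j₀}⊗⋯⊗e_{j₀}|. -/

import Mathlib

open Matrix BigOperators ComplexOrder

noncomputable section

/-- The Frobenius inner product `⟨A, B⟩ = Tr(Aᴴ B)`. -/
def frobInner {m : Type*} [Fintype m] (A B : Matrix m m ℂ) : ℂ :=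
  (Aᴴ * B).trace

/-- The Frobenius norm associated to the Frobenius inner product. -/
def frobNorm {m : Type*} [Fintype m] (A : Matrix m m ℂ) : ℝ :=
  Real.sqrt (frobInner A A).re

/-- A state (density matrix): a positive semidefinite (Hermitian) matrix of trace one. -/
def IsState {m : Type*} [Fintype m] (M : Matrix m m ℂ) : Prop :=
  M.PosSemidef ∧ M.trace = 1

/-- A pure state: a rank-one orthogonal projection, i.e. a Hermitian idempotent of trace one. -/
def IsPureState {m : Type*} [Fintype m] (M : Matrix m m ℂ) : Prop :=
  M.IsHermitian ∧ M * M = M ∧ M.trace = 1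

/-- The Kronecker product of the matrices `A α`, realized on the tuple basis of the
tensor product `ℂ^{n 0} ⊗ ⋯ ⊗ ℂ^{n (p-1)} ≃ ℂ^N`, `N = ∏ α, n α`. -/
def prodMat {p : ℕ} {n : Fin p → ℕ} (A : ∀ α, Matrix (Fin (n α)) (Fin (n α)) ℂ) :
    Matrix (∀ α, Fin (n α)) (∀ α, Fin (n α)) ℂ :=
  fun j k => ∏ α, A α (j α) (k α)

/-- A pure product state: a Kronecker product of pure states on the factors. -/
def IsPureProductState {p : ℕ} {n : Fin p → ℕ}
    (M : Matrix (∀ α, Fin (n α)) (∀ α, Fin (n α)) ℂ) : Prop :=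
  ∃ A : ∀ α, Matrix (Fin (n α)) (Fin (n α)) ℂ,
    (∀ α, IsPureState (A α)) ∧ M = prodMat A

/-- A (fully) separable state: a finite convex combination of pure product states. -/
def IsSeparableState {p : ℕ} {n : Fin p → ℕ}
    (M : Matrix (∀ α, Fin (n α)) (∀ α, Fin (n α)) ℂ) : Prop :=
  ∃ (k : ℕ) (c : Fin k → ℝ) (P : Fin k → Matrix (∀ α, Fin (n α)) (∀ α, Fin (n α)) ℂ),
    (∀ i, 0 ≤ c i) ∧ (∑ i, c i) = 1 ∧ (∀ i, IsPureProductState (P i)) ∧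
      M = ∑ i, (c i : ℂ) • P i

/-- The vector `ψ = ∑ j, v j • (e j ⊗ ⋯ ⊗ e j)`, where `e j` is the `j`-th standard basis
vector of each factor (embedded via `n 0 ≤ n α`). -/
def psiVec {p : ℕ} {n : Fin (p + 2) → ℕ} (hn : Monotone n) (v : Fin (n 0) → ℂ) :
    (∀ α, Fin (n α)) → ℂ :=
  fun x => ∑ j : Fin (n 0), v j *
    ∏ α, (if x α = Fin.castLE (hn (Fin.zero_le α)) j then (1 : ℂ) else 0)

/-- The pure state `E_ψ = |ψ⟩⟨ψ|`. -/
def Epsi {p : ℕ} {n : Fin (p + 2) → ℕ} (hn : Monotone n) (v : Fin (n 0) → ℂ) :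
    Matrix (∀ α, Fin (n α)) (∀ α, Fin (n α)) ℂ :=
  fun x y => psiVec hn v x * star (psiVec hn v y)

/-- The pure product state `S_ψ = |e_{j₀} ⊗ ⋯ ⊗ e_{j₀}⟩⟨e_{j₀} ⊗ ⋯ ⊗ e_{j₀}|`. -/
def Spsi {p : ℕ} {n : Fin (p + 2) → ℕ} (hn : Monotone n) (j₀ : Fin (n 0)) :
    Matrix (∀ α, Fin (n α)) (∀ α, Fin (n α)) ℂ :=
  prodMat fun α => Matrix.single (Fin.castLE (hn (Fin.zero_le α)) j₀)
    (Fin.castLE (hn (Fin.zero_le α)) j₀) 1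

namespace DistAux

/-- helper: star z * z = ‖z‖^2 -/
lemma star_mul_self_eq (z : ℂ) : star z * z = ((‖z‖ ^ 2 : ℝ) : ℂ) := by
  rw [Complex.star_def, ← Complex.normSq_eq_conj_mul_self, ← Complex.sq_norm]

variable {p : ℕ} {n : Fin (p + 2) → ℕ}

def Dg (hn : Monotone n) (j : Fin (n 0)) : ∀ α, Fin (n α) :=
  fun α => Fin.castLE (hn (Fin.zero_le α)) j

lemma Dg_apply_inj (hn : Monotone n) (α : Fin (p + 2)) {j k : Fin (n 0)} :
    Dg hn j α = Dg hn k α ↔ j = k := by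
  constructor
  · exact fun h => Fin.castLE_injective _ h
  · rintro rfl; rfl

lemma Dg_inj (hn : Monotone n) {j k : Fin (n 0)} (h : Dg hn j = Dg hn k) : j = k :=
  (Dg_apply_inj hn 0).mp (congrFun h 0)

lemma psiVec_eq (hn : Monotone n) (v : Fin (n 0) → ℂ) (x : ∀ α, Fin (n α)) :
    psiVec hn v x = ∑ j, v j * (if x = Dg hn j then 1 else 0) := by
  unfold psiVec
  refine Finset.sum_congr rfl fun j _ => ?_
  rw [Fintype.prod_boole]
  congr 1
  simp [funext_iff, Dg]

lemma sum_psi_mul (hn : Monotone n) (v : Fin (n 0) → ℂ) (f : (∀ α, Fin (n α)) → ℂ) :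
    ∑ x, psiVec hn v x * f x = ∑ j, v j * f (Dg hn j) := by
  simp only [psiVec_eq hn v, Finset.sum_mul, mul_assoc, ite_mul, one_mul, zero_mul]
  rw [Finset.sum_comm]
  simp [Finset.sum_ite_eq', mul_ite]

lemma sum_starPsi_mul (hn : Monotone n) (v : Fin (n 0) → ℂ) (f : (∀ α, Fin (n α)) → ℂ) :
    ∑ x, star (psiVec hn v x) * f x = ∑ j, star (v j) * f (Dg hn j) := by
  have : ∀ x, star (psiVec hn v x) = ∑ j, star (v j) * (if x = Dg hn j then 1 else 0) := by
    intro x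
    rw [psiVec_eq hn v, star_sum]
    refine Finset.sum_congr rfl fun j _ => ?_
    rw [star_mul']
    simp [apply_ite (star : ℂ → ℂ)]
  simp only [this, Finset.sum_mul, mul_assoc, ite_mul, one_mul, zero_mul]
  rw [Finset.sum_comm]
  simp [Finset.sum_ite_eq', mul_ite]

lemma quad_sum (hn : Monotone n) (v : Fin (n 0) → ℂ)
    (A : Matrix (∀ α, Fin (n α)) (∀ α, Fin (n α)) ℂ) :
    ∑ x, ∑ y, star (psiVec hn v x) * A x y * psiVec hn v y
      = ∑ j, ∑ k, star (v j) * A (Dg hn j) (Dg hn k) * v k := by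
  have h1 : ∀ x, ∑ y, star (psiVec hn v x) * A x y * psiVec hn v y
      = star (psiVec hn v x) * ∑ k, v k * A x (Dg hn k) := by
    intro x
    rw [Finset.mul_sum]
    rw [show (∑ y, star (psiVec hn v x) * A x y * psiVec hn v y)
        = ∑ y, psiVec hn v y * (star (psiVec hn v x) * A x y) from
      Finset.sum_congr rfl fun y _ => by ring]
    rw [sum_psi_mul hn v]
    exact Finset.sum_congr rfl fun k _ => by ring
  simp only [h1]
  rw [sum_starPsi_mul hn v]
  refine Finset.sum_congr rfl fun j _ => ?_
  rw [Finset.mul_sum]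
  exact Finset.sum_congr rfl fun k _ => by ring

lemma frobInner_Epsi (hn : Monotone n) (v : Fin (n 0) → ℂ)
    (A : Matrix (∀ α, Fin (n α)) (∀ α, Fin (n α)) ℂ) :
    frobInner (Epsi hn v) A = ∑ j, ∑ k, star (v j) * A (Dg hn j) (Dg hn k) * v k := by
  rw [← quad_sum hn v A]
  unfold frobInner
  rw [Matrix.trace]
  simp only [Matrix.diag, Matrix.mul_apply, Matrix.conjTranspose_apply, Epsi]
  rw [Finset.sum_comm]
  refine Finset.sum_congr rfl fun x _ => Finset.sum_congr rfl fun y _ => ?_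
  rw [star_mul', star_star]
  ring


section PureState
variable {m : Type*} [Fintype m]

lemma pure_apply_eq {M : Matrix m m ℂ} (h : IsPureState M) (j k : m) :
    M j k = ∑ l, star (M l j) * M l k := by
  have hM : M = Mᴴ * M := by rw [h.1.eq]; exact h.2.1.symm
  conv_lhs => rw [hM]
  simp [Matrix.mul_apply, Matrix.conjTranspose_apply]

lemma pure_diag_re {M : Matrix m m ℂ} (h : IsPureState M) (j : m) :
    (M j j).re = ∑ l, ‖M l j‖ ^ 2 := by
  have := pure_apply_eq h j j
  simp only [DistAux.star_mul_self_eq] at this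
  rw [this, ← Complex.ofReal_sum, Complex.ofReal_re]

lemma pure_diag_nonneg {M : Matrix m m ℂ} (h : IsPureState M) (j : m) :
    0 ≤ (M j j).re := by
  rw [pure_diag_re h]
  positivity

lemma pure_sum_diag_re {M : Matrix m m ℂ} (h : IsPureState M) :
    ∑ l, (M l l).re = 1 := by
  have : (M.trace).re = 1 := by rw [h.2.2]; simp
  rw [← this, Matrix.trace]
  exact (Complex.re_sum _ _).symm

lemma pure_diag_le_one {M : Matrix m m ℂ} (h : IsPureState M) (j : m) :
    (M j j).re ≤ 1 := by
  rw [← pure_sum_diag_re h]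
  exact Finset.single_le_sum (fun l _ => pure_diag_nonneg h l) (Finset.mem_univ j)

lemma pure_norm_apply_le {M : Matrix m m ℂ} (h : IsPureState M) (j k : m) :
    ‖M j k‖ ≤ Real.sqrt (M j j).re * Real.sqrt (M k k).re := by
  have h1 : ‖M j k‖ ≤ ∑ l, ‖M l j‖ * ‖M l k‖ := by
    rw [pure_apply_eq h j k]
    refine (norm_sum_le _ _).trans (le_of_eq ?_)
    refine Finset.sum_congr rfl fun l _ => ?_
    rw [norm_mul, norm_star]
  have h2 : (∑ l, ‖M l j‖ * ‖M l k‖) ^ 2 ≤ (∑ l, ‖M l j‖ ^ 2) * (∑ l, ‖M l k‖ ^ 2) :=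
    Finset.sum_mul_sq_le_sq_mul_sq _ _ _
  have key : ‖M j k‖ ^ 2 ≤ (M j j).re * (M k k).re := by
    calc ‖M j k‖ ^ 2 ≤ (∑ l, ‖M l j‖ * ‖M l k‖) ^ 2 :=
          pow_le_pow_left₀ (norm_nonneg _) h1 2
      _ ≤ (∑ l, ‖M l j‖ ^ 2) * (∑ l, ‖M l k‖ ^ 2) := h2
      _ = _ := by rw [← pure_diag_re h, ← pure_diag_re h]
  rw [← Real.sqrt_sq (norm_nonneg (M j k)), ← Real.sqrt_mul (pure_diag_nonneg h j)]
  exact Real.sqrt_le_sqrt key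

lemma frobInner_self_pure {M : Matrix m m ℂ} (h : IsPureState M) :
    frobInner M M = 1 := by
  unfold frobInner
  rw [h.1.eq, h.2.1, h.2.2]

lemma frobInner_star_comm (A B : Matrix m m ℂ) :
    frobInner A B = star (frobInner B A) := by
  unfold frobInner
  rw [← Matrix.trace_conjTranspose, Matrix.conjTranspose_mul,
    Matrix.conjTranspose_conjTranspose]

lemma frobInner_sub_sub (A B : Matrix m m ℂ) :
    frobInner (A - B) (A - B)
      = frobInner A A - frobInner A B - frobInner B A + frobInner B B := by
  simp only [frobInner, Matrix.conjTranspose_sub, Matrix.sub_mul, Matrix.mul_sub,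
    Matrix.trace_sub]
  ring

end PureState

section ProdMat
variable {q : ℕ} {nn : Fin q → ℕ}

lemma prodMat_trace (A : ∀ α, Matrix (Fin (nn α)) (Fin (nn α)) ℂ) :
    (prodMat A).trace = ∏ α, (A α).trace := by
  simp only [Matrix.trace, Matrix.diag, prodMat]
  exact (Fintype.prod_sum fun α j => A α j j).symm

lemma prodMat_mul (A B : ∀ α, Matrix (Fin (nn α)) (Fin (nn α)) ℂ) :
    prodMat A * prodMat B = prodMat fun α => A α * B α := by
  ext x y
  simp only [Matrix.mul_apply, prodMat]
  rw [Fintype.prod_sum fun α b => A α (x α) b * B α b (y α)]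
  exact Finset.sum_congr rfl fun z _ => (Finset.prod_mul_distrib).symm

lemma prodMat_conjTranspose (A : ∀ α, Matrix (Fin (nn α)) (Fin (nn α)) ℂ) :
    (prodMat A)ᴴ = prodMat fun α => (A α)ᴴ := by
  ext x y
  simp [prodMat, Matrix.conjTranspose_apply]

lemma prodMat_pure {A : ∀ α, Matrix (Fin (nn α)) (Fin (nn α)) ℂ}
    (h : ∀ α, IsPureState (A α)) : IsPureState (prodMat A) := by
  refine ⟨?_, ?_, ?_⟩
  · show (prodMat A)ᴴ = prodMat A
    rw [prodMat_conjTranspose]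
    have : (fun α => (A α)ᴴ) = A := funext fun α => (h α).1.eq
    rw [this]
  · rw [prodMat_mul]
    have : (fun α => A α * A α) = A := funext fun α => (h α).2.1
    rw [this]
  · rw [prodMat_trace]
    simp only [fun α => (h α).2.2]
    simp

end ProdMat

lemma stdBasis_pure {m : Type*} [Fintype m] [DecidableEq m] (i : m) :
    IsPureState (Matrix.single i i (1 : ℂ)) := by
  refine ⟨?_, ?_, ?_⟩
  · show _ᴴ = _
    ext a b
    simp only [Matrix.conjTranspose_apply, Matrix.single, Matrix.of_apply]
    rw [apply_ite (star : ℂ → ℂ)]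
    simp [and_comm]
  · rw [Matrix.single_mul_single_same]
    norm_num
  · exact Matrix.trace_single_eq_same (i := i) (c := (1 : ℂ))



variable {p : ℕ} {n : Fin (p + 2) → ℕ}

lemma Dg_eq_iff (hn : Monotone n) {j k : Fin (n 0)} : Dg hn j = Dg hn k ↔ j = k :=
  ⟨Dg_inj hn, by rintro rfl; rfl⟩

lemma psiVec_Dg (hn : Monotone n) (v : Fin (n 0) → ℂ) (j : Fin (n 0)) :
    psiVec hn v (Dg hn j) = v j := by
  rw [psiVec_eq]
  simp only [Dg_eq_iff]
  simp [Finset.sum_ite_eq]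

lemma hunit {v : Fin (n 0) → ℂ} (hv : ∑ j, ‖v j‖ ^ 2 = 1) :
    ∑ j, star (v j) * v j = 1 := by
  simp only [star_mul_self_eq]
  rw [← Complex.ofReal_sum, hv]
  norm_num

lemma frobInner_Epsi_self (hn : Monotone n) {v : Fin (n 0) → ℂ}
    (hv : ∑ j, ‖v j‖ ^ 2 = 1) :
    frobInner (Epsi hn v) (Epsi hn v) = 1 := by
  rw [frobInner_Epsi]
  calc (∑ j, ∑ k, star (v j) * Epsi hn v (Dg hn j) (Dg hn k) * v k)
      = ∑ j, ∑ k, (star (v j) * v j) * (star (v k) * v k) := by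
        refine Finset.sum_congr rfl fun j _ => Finset.sum_congr rfl fun k _ => ?_
        show star (v j) * (psiVec hn v (Dg hn j) * star (psiVec hn v (Dg hn k))) * v k = _
        rw [psiVec_Dg, psiVec_Dg]
        ring
    _ = (∑ j, star (v j) * v j) * (∑ k, star (v k) * v k) :=
        (Finset.sum_mul_sum _ _ _ _).symm
    _ = 1 := by rw [hunit hv]; ring

lemma Spsi_entry (hn : Monotone n) (j₀ j k : Fin (n 0)) :
    Spsi hn j₀ (Dg hn j) (Dg hn k) = if j = j₀ ∧ k = j₀ then (1 : ℂ) else 0 := by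
  unfold Spsi prodMat
  simp only [Matrix.single, Matrix.of_apply]
  by_cases hj : j = j₀
  · by_cases hk : k = j₀
    · subst hj; subst hk
      rw [if_pos ⟨rfl, rfl⟩]
      refine Finset.prod_eq_one fun α _ => ?_
      rw [if_pos ⟨rfl, rfl⟩]
    · rw [if_neg (by tauto)]
      refine Finset.prod_eq_zero (Finset.mem_univ (0 : Fin (p + 2))) ?_
      rw [if_neg]
      rintro ⟨-, h2⟩
      exact hk ((Dg_apply_inj hn 0).mp h2.symm)
  · rw [if_neg (by tauto)]
    refine Finset.prod_eq_zero (Finset.mem_univ (0 : Fin (p + 2))) ?_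
    rw [if_neg]
    rintro ⟨h1, -⟩
    exact hj ((Dg_apply_inj hn 0).mp h1.symm)

lemma frobInner_Epsi_Spsi (hn : Monotone n) (v : Fin (n 0) → ℂ) (j₀ : Fin (n 0)) :
    frobInner (Epsi hn v) (Spsi hn j₀) = ((‖v j₀‖ ^ 2 : ℝ) : ℂ) := by
  rw [frobInner_Epsi]
  have hterm : ∀ j k, star (v j) * Spsi hn j₀ (Dg hn j) (Dg hn k) * v k
      = (if j = j₀ then star (v j) else 0) * (if k = j₀ then v k else 0) := by
    intro j k
    rw [Spsi_entry]
    by_cases h1 : j = j₀ <;> by_cases h2 : k = j₀ <;> simp [h1, h2]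
  simp only [hterm]
  rw [← Finset.sum_mul_sum]
  simp only [Finset.sum_ite_eq', Finset.mem_univ, if_true]
  exact star_mul_self_eq (v j₀)

end DistAux

open DistAux

/-- The minimum Frobenius distance from `E_ψ` to the set of pure
product states equals `√(2 (1 - |v j₀|²))`, where `|v j₀| = max_j |v j|`: every pure
product state `A` satisfies `‖E_ψ - A‖ ≥ √(2 (1 - |v j₀|²))`, and the bound is attained
by the pure product state `S_ψ`. -/
theorem dist_Epsi_pureProduct {p : ℕ} {n : Fin (p + 2) → ℕ}
    (hn : Monotone n) (hn₁ : 2 ≤ n 0)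
    (v : Fin (n 0) → ℂ) (hv : ∑ j, ‖v j‖ ^ 2 = 1)
    (j₀ : Fin (n 0)) (hj₀ : ∀ j, ‖v j‖ ≤ ‖v j₀‖) :
    (∀ A : Matrix (∀ α, Fin (n α)) (∀ α, Fin (n α)) ℂ, IsPureProductState A →
        Real.sqrt (2 * (1 - ‖v j₀‖ ^ 2)) ≤ frobNorm (Epsi hn v - A)) ∧
      IsPureProductState (Spsi hn j₀) ∧
      frobNorm (Epsi hn v - Spsi hn j₀) = Real.sqrt (2 * (1 - ‖v j₀‖ ^ 2)) := by
  have hSpure : ∀ α, IsPureState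
      (Matrix.single (Fin.castLE (hn (Fin.zero_le α)) j₀)
        (Fin.castLE (hn (Fin.zero_le α)) j₀) (1 : ℂ)) :=
    fun α => stdBasis_pure _
  have hSprod : IsPureProductState (Spsi hn j₀) := ⟨_, hSpure, rfl⟩
  have hSpsi_pure : IsPureState (Spsi hn j₀) := prodMat_pure hSpure
  have hEE := frobInner_Epsi_self hn hv
  -- general re formula
  have hre : ∀ A : Matrix (∀ α, Fin (n α)) (∀ α, Fin (n α)) ℂ, IsPureState A →
      (frobInner (Epsi hn v - A) (Epsi hn v - A)).re
        = 2 - 2 * (frobInner (Epsi hn v) A).re := by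
    intro A hA
    rw [frobInner_sub_sub, hEE, frobInner_self_pure hA,
      frobInner_star_comm A (Epsi hn v)]
    simp only [Complex.star_def, Complex.add_re, Complex.sub_re, Complex.one_re,
      Complex.conj_re]
    ring
  refine ⟨?_, hSprod, ?_⟩
  · rintro A ⟨B, hB, rfl⟩
    have hApure : IsPureState (prodMat B) := prodMat_pure hB
    -- key bound on the overlap
    have hkey : (frobInner (Epsi hn v) (prodMat B)).re ≤ ‖v j₀‖ ^ 2 := by
      set s : Fin (p + 2) → Fin (n 0) → ℝ :=
        fun α j => Real.sqrt ((B α (Dg hn j α) (Dg hn j α)).re) with hs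
      have hs0 : ∀ α j, 0 ≤ s α j := fun α j => Real.sqrt_nonneg _
      have hs1 : ∀ α j, s α j ≤ 1 :=
        fun α j => Real.sqrt_le_one.mpr (pure_diag_le_one (hB α) _)
      have hssq : ∀ α j, s α j ^ 2 = (B α (Dg hn j α) (Dg hn j α)).re :=
        fun α j => Real.sq_sqrt (pure_diag_nonneg (hB α) _)
      set w : Fin (n 0) → ℝ := fun j => ∏ α, s α j with hwdef
      have hw0 : ∀ j, 0 ≤ w j := fun j => Finset.prod_nonneg fun α _ => hs0 α j
      have hw_le : ∀ j, w j ≤ s 0 j * s 1 j := by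
        intro j
        have h1 : w j = s 0 j * (s ((0 : Fin (p + 1)).succ) j *
            ∏ α : Fin p, s α.succ.succ j) := by
          show (∏ α : Fin (p + 2), s α j) = _
          rw [Fin.prod_univ_succ (f := fun α => s α j),
            Fin.prod_univ_succ (f := fun α : Fin (p + 1) => s α.succ j)]
        have h2 : (∏ α : Fin p, s α.succ.succ j) ≤ 1 :=
          Finset.prod_le_one (fun α _ => hs0 _ j) (fun α _ => hs1 _ j)
        have hP0 : (0 : ℝ) ≤ ∏ α : Fin p, s α.succ.succ j :=
          Finset.prod_nonneg fun α _ => hs0 _ j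
        have h3 : (0 : Fin (p + 1)).succ = (1 : Fin (p + 2)) := Fin.succ_zero_eq_one
        rw [h1, h3]
        have t1 : s 1 j * ∏ α : Fin p, s α.succ.succ j ≤ s 1 j := by
          nlinarith [hs0 1 j]
        exact mul_le_mul_of_nonneg_left t1 (hs0 0 j)
      have hsum_diag : ∀ α : Fin (p + 2), ∑ j, s α j ^ 2 ≤ 1 := by
        intro α
        simp only [hssq]
        have inj : ∀ a ∈ Finset.univ, ∀ b ∈ Finset.univ,
            Dg hn a α = Dg hn b α → a = b :=
          fun a _ b _ hab => (Dg_apply_inj hn α).mp hab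
        calc (∑ j, (B α (Dg hn j α) (Dg hn j α)).re)
            = ∑ l ∈ Finset.univ.image (fun j => Dg hn j α), (B α l l).re :=
              (Finset.sum_image (f := fun l => (B α l l).re) inj).symm
          _ ≤ ∑ l, (B α l l).re :=
              Finset.sum_le_sum_of_subset_of_nonneg (Finset.subset_univ _)
                (fun l _ _ => pure_diag_nonneg (hB α) l)
          _ = 1 := pure_sum_diag_re (hB α)
      have hsumw : ∑ j, w j ≤ 1 := by
        have hcs := Finset.sum_mul_sq_le_sq_mul_sq Finset.univ
          (fun j => s 0 j) (fun j => s 1 j)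
        have h01 : (∑ j, s 0 j * s 1 j) ^ 2 ≤ 1 := by
          calc (∑ j, s 0 j * s 1 j) ^ 2
              ≤ (∑ j, s 0 j ^ 2) * (∑ j, s 1 j ^ 2) := hcs
            _ ≤ 1 * 1 := by
                apply mul_le_mul (hsum_diag 0) (hsum_diag 1)
                  (Finset.sum_nonneg fun j _ => sq_nonneg _) (by norm_num)
            _ = 1 := by norm_num
        have hnn : 0 ≤ ∑ j, s 0 j * s 1 j :=
          Finset.sum_nonneg fun j _ => mul_nonneg (hs0 _ _) (hs0 _ _)
        calc ∑ j, w j ≤ ∑ j, s 0 j * s 1 j := Finset.sum_le_sum fun j _ => hw_le j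
          _ ≤ 1 := by nlinarith
      have hentry : ∀ j k, ‖prodMat B (Dg hn j) (Dg hn k)‖ ≤ w j * w k := by
        intro j k
        calc ‖prodMat B (Dg hn j) (Dg hn k)‖
            = ∏ α, ‖B α (Dg hn j α) (Dg hn k α)‖ := norm_prod _ _
          _ ≤ ∏ α, s α j * s α k :=
              Finset.prod_le_prod (fun α _ => norm_nonneg _)
                (fun α _ => pure_norm_apply_le (hB α) _ _)
          _ = w j * w k := Finset.prod_mul_distrib
      have hS : ∑ j, ‖v j‖ * w j ≤ ‖v j₀‖ := by
        calc ∑ j, ‖v j‖ * w j ≤ ∑ j, ‖v j₀‖ * w j :=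
              Finset.sum_le_sum fun j _ => mul_le_mul_of_nonneg_right (hj₀ j) (hw0 j)
          _ = ‖v j₀‖ * ∑ j, w j := by rw [Finset.mul_sum]
          _ ≤ ‖v j₀‖ * 1 := mul_le_mul_of_nonneg_left hsumw (norm_nonneg _)
          _ = ‖v j₀‖ := mul_one _
      have habs : ‖frobInner (Epsi hn v) (prodMat B)‖ ≤ ‖v j₀‖ ^ 2 := by
        rw [frobInner_Epsi]
        calc ‖∑ j, ∑ k, star (v j) * prodMat B (Dg hn j) (Dg hn k) * v k‖
            ≤ ∑ j, ∑ k, ‖star (v j) * prodMat B (Dg hn j) (Dg hn k) * v k‖ :=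
              (norm_sum_le _ _).trans
                (Finset.sum_le_sum fun j _ => norm_sum_le _ _)
          _ ≤ ∑ j, ∑ k, (‖v j‖ * w j) * (‖v k‖ * w k) := by
              refine Finset.sum_le_sum fun j _ => Finset.sum_le_sum fun k _ => ?_
              rw [norm_mul, norm_mul, norm_star]
              calc ‖v j‖ * ‖prodMat B (Dg hn j) (Dg hn k)‖ * ‖v k‖
                  ≤ ‖v j‖ * (w j * w k) * ‖v k‖ := by
                    refine mul_le_mul_of_nonneg_right ?_ (norm_nonneg _)
                    exact mul_le_mul_of_nonneg_left (hentry j k) (norm_nonneg _)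
                _ = (‖v j‖ * w j) * (‖v k‖ * w k) := by ring
          _ = (∑ j, ‖v j‖ * w j) ^ 2 := by
              rw [sq, Finset.sum_mul_sum]
          _ ≤ ‖v j₀‖ ^ 2 := by
              apply pow_le_pow_left₀ ?_ hS
              exact Finset.sum_nonneg fun j _ =>
                mul_nonneg (norm_nonneg _) (hw0 j)
      exact le_trans (Complex.re_le_norm _) habs
    -- conclude
    unfold frobNorm
    apply Real.sqrt_le_sqrt
    rw [hre _ hApure]
    linarith
  · unfold frobNorm
    rw [hre _ hSpsi_pure, frobInner_Epsi_Spsi hn v j₀]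
    congr 1
    simp only [Complex.ofReal_re]
    ring
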